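/- For valid Gray code strings g, h of length B, g ⪯ h if and only if (max^rg_M{g,h}, min^rg_M{g,h}) = (h, g). -/

import Mathlib

/-- A Kleene "bit": `some b` is a stable bit, `none` is metastable `M`. -/
abbrev KBit := Option Bool

/-- The `B`-bit binary reflected Gray code (bit `0` most significant). -/
def rg : (B : ℕ) → ℕ → (Fin B → Bool)
  | 0, _ => fun i => i.elim0
  | B + 1, x =>
      Fin.cons (decide (2 ^ B ≤ x)) (rg B (if x < 2 ^ B then x else 2 ^ (B + 1) - 1 - x))

/-- Decoding of a `B`-bit binary reflected Gray code string. -/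
def grayVal : (B : ℕ) → (Fin B → Bool) → ℕ
  | 0, _ => 0
  | B + 1, g =>
      if g 0 then 2 ^ (B + 1) - 1 - grayVal B (fun i => g i.succ)
      else grayVal B (fun i => g i.succ)

/-- The (stable) Gray codeword `rg_B(x)` viewed as a string over `{0,1,M}`. -/
def stableStr (B : ℕ) (x : ℕ) : Fin B → KBit := fun i => some (rg B x i)

/-- The superposition `rg_B(x) * rg_B(x+1)` of two consecutive Gray codewords. -/
def superStr (B : ℕ) (x : ℕ) : Fin B → KBit :=
  fun i => if rg B x i = rg B (x + 1) i then some (rg B x i) else none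

/-- Valid strings of length `B`: Gray codewords, or superpositions of two
consecutive Gray codewords. -/
def Valid (B : ℕ) : Set (Fin B → KBit) :=
  {g | (∃ x, x < 2 ^ B ∧ g = stableStr B x) ∨ (∃ x, x + 1 < 2 ^ B ∧ g = superStr B x)}

/-- The rank of a valid string in the total order `≺`: `rg_B(x)` has rank `2x` and
`rg_B(x) * rg_B(x+1)` has rank `2x + 1`. -/
noncomputable def rank (B : ℕ) (g : Fin B → KBit) : ℕ :=
  sInf {n | (∃ x, n = 2 * x ∧ g = stableStr B x) ∨ (∃ x, n = 2 * x + 1 ∧ g = superStr B x)}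

/-- The total order `⪯` on valid strings. -/
noncomputable def preceq (B : ℕ) (g h : Fin B → KBit) : Prop := rank B g ≤ rank B h

/-- The resolution of a string over `{0,1,M}`. -/
def res {B : ℕ} (x : Fin B → KBit) : Set (Fin B → Bool) :=
  {y | ∀ i : Fin B, ∀ b : Bool, x i = some b → y i = b}

open Classical in
/-- The superposition of a set of binary strings. -/
noncomputable def supStr {B : ℕ} (S : Set (Fin B → Bool)) : Fin B → KBit :=
  fun i =>
    if ∀ y ∈ S, y i = true then some true
    else if ∀ y ∈ S, y i = false then some false
    else none

/-- `max^rg` of two stable Gray code strings: the one of larger decoded value. -/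
def maxrg (B : ℕ) (g h : Fin B → Bool) : Fin B → Bool :=
  if grayVal B h ≤ grayVal B g then g else h

/-- `min^rg` of two stable Gray code strings: the one of smaller decoded value. -/
def minrg (B : ℕ) (g h : Fin B → Bool) : Fin B → Bool :=
  if grayVal B h ≤ grayVal B g then h else g

/-- The metastable closure `max^rg_M`, taken jointly over all resolutions of the pair. -/
noncomputable def maxrgM (B : ℕ) (g h : Fin B → KBit) : Fin B → KBit :=
  supStr {z | ∃ g' ∈ res g, ∃ h' ∈ res h, z = maxrg B g' h'}

/-- The metastable closure `min^rg_M`, taken jointly over all resolutions of the pair. -/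
noncomputable def minrgM (B : ℕ) (g h : Fin B → KBit) : Fin B → KBit :=
  supStr {z | ∃ g' ∈ res g, ∃ h' ∈ res h, z = minrg B g' h'}

lemma rg_succ (B x : ℕ) : rg (B+1) x =
    Fin.cons (decide (2 ^ B ≤ x)) (rg B (if x < 2 ^ B then x else 2 ^ (B + 1) - 1 - x)) := rfl

lemma grayVal_cons (B : ℕ) (b : Bool) (t : Fin B → Bool) :
    grayVal (B+1) (Fin.cons b t) = if b then 2 ^ (B+1) - 1 - grayVal B t else grayVal B t := by
  simp [grayVal, Fin.cons_zero, Fin.cons_succ]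

lemma grayVal_rg : ∀ B x, x < 2 ^ B → grayVal B (rg B x) = x := by
  intro B
  induction B with
  | zero => intro x hx; interval_cases x; rfl
  | succ B ih =>
    intro x hx
    have h2 : 0 < 2 ^ B := Nat.two_pow_pos B
    have hp : 2 ^ (B+1) = 2 * 2 ^ B := by ring
    by_cases hlt : x < 2 ^ B
    · rw [rg_succ, if_pos hlt]
      have : decide (2 ^ B ≤ x) = false := by simp [Nat.not_le.mpr hlt]
      rw [this, grayVal_cons]
      simp [ih x hlt]
    · push_neg at hlt
      have hx' : 2 ^ (B+1) - 1 - x < 2 ^ B := by omega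
      rw [rg_succ, if_neg (Nat.not_lt.mpr hlt)]
      have : decide (2 ^ B ≤ x) = true := by simp [hlt]
      rw [this, grayVal_cons]
      simp only [if_true]
      rw [ih _ hx']
      omega

lemma rg_inj {B x y : ℕ} (hx : x < 2 ^ B) (hy : y < 2 ^ B) (h : rg B x = rg B y) : x = y := by
  rw [← grayVal_rg B x hx, ← grayVal_rg B y hy, h]

lemma res_stable (B x : ℕ) : res (stableStr B x) = {rg B x} := by
  ext y
  simp only [res, stableStr, Set.mem_setOf_eq, Set.mem_singleton_iff]
  constructor
  · intro hy; funext i; exact hy i _ rfl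
  · rintro rfl i b hb; exact Option.some_inj.mp hb

lemma adj_resolve : ∀ B x, x + 1 < 2 ^ B → ∀ y : Fin B → Bool,
    (∀ i, rg B x i = rg B (x+1) i → y i = rg B x i) → y = rg B x ∨ y = rg B (x+1) := by
  intro B
  induction B with
  | zero => intro x hx; simp at hx
  | succ B ih =>
    intro x hx y hy
    have h2 : 0 < 2 ^ B := Nat.two_pow_pos B
    have hp : 2 ^ (B+1) = 2 * 2 ^ B := by ring
    have hytail : y = Fin.cons (y 0) (Fin.tail y) := (Fin.cons_self_tail y).symm
    rcases lt_trichotomy (x+1) (2^B) with hc | hc | hc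
    · -- both in first half
      have e1 : rg (B+1) x = Fin.cons false (rg B x) := by
        rw [rg_succ, if_pos (by omega)]; congr 1; simp; omega
      have e2 : rg (B+1) (x+1) = Fin.cons false (rg B (x+1)) := by
        rw [rg_succ, if_pos (by omega)]; congr 1; simp; omega
      have hy0 : y 0 = false := by
        have := hy 0 (by rw [e1, e2]; simp)
        rwa [e1, Fin.cons_zero] at this
      have htail := ih x hc (Fin.tail y) (by
        intro j hj
        have := hy j.succ (by rw [e1, e2, Fin.cons_succ, Fin.cons_succ]; exact hj)
        rwa [e1, Fin.cons_succ] at this)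
      rcases htail with ht | ht
      · left; rw [e1, hytail, hy0, ht]
      · right; rw [e2, hytail, hy0, ht]
    · -- x+1 = 2^B : boundary, tails agree
      have e1 : rg (B+1) x = Fin.cons false (rg B x) := by
        rw [rg_succ, if_pos (by omega)]; congr 1; simp; omega
      have e2 : rg (B+1) (x+1) = Fin.cons true (rg B x) := by
        rw [rg_succ, if_neg (by omega)]
        have : 2 ^ (B+1) - 1 - (x+1) = x := by omega
        rw [this]; congr 1; simp; omega
      have htail : Fin.tail y = rg B x := by
        funext j
        have := hy j.succ (by rw [e1, e2, Fin.cons_succ, Fin.cons_succ])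
        rwa [e1, Fin.cons_succ] at this
      cases hb : y 0 with
      | false => left; rw [e1, hytail, hb, htail]
      | true => right; rw [e2, hytail, hb, htail]
    · -- second half
      have hge : 2 ^ B ≤ x := by omega
      set z := 2 ^ (B+1) - 1 - (x+1) with hz
      have hz1 : z + 1 < 2 ^ B := by omega
      have e1 : rg (B+1) x = Fin.cons true (rg B (z+1)) := by
        rw [rg_succ, if_neg (by omega)]
        have : 2 ^ (B+1) - 1 - x = z + 1 := by omega
        rw [this]; congr 1; simp; omega
      have e2 : rg (B+1) (x+1) = Fin.cons true (rg B z) := by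
        rw [rg_succ, if_neg (by omega)]; congr 1; simp; omega
      have hy0 : y 0 = true := by
        have := hy 0 (by rw [e1, e2]; simp)
        rwa [e1, Fin.cons_zero] at this
      have htail := ih z hz1 (Fin.tail y) (by
        intro j hj
        have := hy j.succ (by rw [e1, e2, Fin.cons_succ, Fin.cons_succ]; exact hj.symm)
        rw [e1, Fin.cons_succ] at this
        exact this.trans hj.symm)
      rcases htail with ht | ht
      · right; rw [e2, hytail, hy0, ht]
      · left; rw [e1, hytail, hy0, ht]

lemma res_super {B x : ℕ} (hx : x + 1 < 2 ^ B) :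
    res (superStr B x) = {rg B x, rg B (x+1)} := by
  ext y
  simp only [res, superStr, Set.mem_setOf_eq, Set.mem_insert_iff, Set.mem_singleton_iff]
  constructor
  · intro hy
    apply adj_resolve B x hx
    intro i hi
    exact hy i _ (by rw [if_pos hi])
  · rintro (rfl | rfl) i b hb
    · by_cases hi : rg B x i = rg B (x+1) i
      · rw [if_pos hi] at hb; exact Option.some_inj.mp hb
      · rw [if_neg hi] at hb; exact absurd hb (by simp)
    · by_cases hi : rg B x i = rg B (x+1) i
      · rw [if_pos hi] at hb; rw [← hi]; exact Option.some_inj.mp hb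
      · rw [if_neg hi] at hb; exact absurd hb (by simp)

lemma supStr_singleton {B : ℕ} (y : Fin B → Bool) :
    supStr {y} = fun i => some (y i) := by
  funext i
  simp only [supStr, Set.mem_singleton_iff, forall_eq]
  cases hb : y i <;> simp

lemma supStr_pair_super (B x : ℕ) :
    supStr {rg B x, rg B (x+1)} = superStr B x := by
  funext i
  simp only [supStr, superStr, Set.mem_insert_iff, Set.mem_singleton_iff]
  by_cases hi : rg B x i = rg B (x+1) i
  · rw [if_pos hi]
    cases hb : rg B x i
    · rw [if_neg, if_pos]
      · rintro y (rfl | rfl); exact hb; rw [← hi]; exact hb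
      · intro hall
        have := hall (rg B x) (Or.inl rfl)
        rw [hb] at this; exact Bool.false_ne_true this
    · rw [if_pos]
      rintro y (rfl | rfl); exact hb; rw [← hi]; exact hb
  · rw [if_neg hi, if_neg, if_neg]
    · intro hall
      have h1 := hall (rg B x) (Or.inl rfl)
      have h2 := hall (rg B (x+1)) (Or.inr rfl)
      exact hi (h1.trans h2.symm)
    · intro hall
      have h1 := hall (rg B x) (Or.inl rfl)
      have h2 := hall (rg B (x+1)) (Or.inr rfl)
      exact hi (h1.trans h2.symm)

lemma maxrg_rg {B a b : ℕ} (ha : a < 2 ^ B) (hb : b < 2 ^ B) :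
    maxrg B (rg B a) (rg B b) = rg B (max a b) := by
  rw [maxrg, grayVal_rg B a ha, grayVal_rg B b hb]
  by_cases h : b ≤ a
  · rw [if_pos h, Nat.max_eq_left h]
  · rw [if_neg h, Nat.max_eq_right (by omega)]

lemma minrg_rg {B a b : ℕ} (ha : a < 2 ^ B) (hb : b < 2 ^ B) :
    minrg B (rg B a) (rg B b) = rg B (min a b) := by
  rw [minrg, grayVal_rg B a ha, grayVal_rg B b hb]
  by_cases h : b ≤ a
  · rw [if_pos h, Nat.min_eq_right h]
  · rw [if_neg h, Nat.min_eq_left (by omega)]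

lemma stable_ne_super {B x y : ℕ} (hx : x < 2 ^ B) (hy : y + 1 < 2 ^ B) :
    stableStr B x ≠ superStr B y := by
  intro he
  have hne : rg B y ≠ rg B (y+1) := fun h => by
    have := rg_inj (by omega) hy h; omega
  have : rg B y = rg B (y+1) := by
    funext i
    by_contra hi
    have := congrFun he i
    rw [stableStr, superStr] at this
    simp only [if_neg hi] at this
    exact Option.some_ne_none _ this
  exact hne this

lemma stable_inj {B x y : ℕ} (hx : x < 2 ^ B) (hy : y < 2 ^ B)
    (h : stableStr B x = stableStr B y) : x = y := by
  apply rg_inj hx hy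
  funext i
  have := congrFun h i
  exact Option.some_inj.mp this

lemma super_inj {B x y : ℕ} (hx : x + 1 < 2 ^ B) (hy : y + 1 < 2 ^ B)
    (h : superStr B x = superStr B y) : x = y := by
  have hres : ({rg B x, rg B (x+1)} : Set (Fin B → Bool)) = {rg B y, rg B (y+1)} := by
    rw [← res_super hx, ← res_super hy, h]
  have h1 : rg B x = rg B y ∨ rg B x = rg B (y+1) := by
    have : rg B x ∈ ({rg B y, rg B (y+1)} : Set (Fin B → Bool)) := by
      rw [← hres]; left; rfl
    simpa using this
  have h2 : rg B (x+1) = rg B y ∨ rg B (x+1) = rg B (y+1) := by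
    have : rg B (x+1) ∈ ({rg B y, rg B (y+1)} : Set (Fin B → Bool)) := by
      rw [← hres]; right; rfl
    simpa using this
  rcases h1 with h1 | h1 <;> rcases h2 with h2 | h2
  · exact rg_inj (by omega) (by omega) h1
  · exact rg_inj (by omega) (by omega) h1
  · have e1 := rg_inj (by omega) (by omega) h1
    have e2 := rg_inj (by omega) (by omega) h2
    omega
  · have e2 := rg_inj (by omega) (by omega) h2
    omega

lemma rank_stable {B x : ℕ} (hx : x < 2 ^ B) : rank B (stableStr B x) = 2 * x := by
  have hmem : 2 * x ∈ {n | (∃ y, n = 2 * y ∧ stableStr B x = stableStr B y) ∨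
      (∃ y, n = 2 * y + 1 ∧ stableStr B x = superStr B y)} := Or.inl ⟨x, rfl, rfl⟩
  apply le_antisymm (Nat.sInf_le hmem)
  have hne : {n | (∃ y, n = 2 * y ∧ stableStr B x = stableStr B y) ∨
      (∃ y, n = 2 * y + 1 ∧ stableStr B x = superStr B y)}.Nonempty := ⟨_, hmem⟩
  have hsm := Nat.sInf_mem hne
  rcases hsm with ⟨y, hy, he⟩ | ⟨y, hy, he⟩
  · rw [hy]
    by_cases hylt : y < 2 ^ B
    · rw [stable_inj hx hylt he]
    · push_neg at hylt; omega
  · rw [hy]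
    by_cases hylt : y + 1 < 2 ^ B
    · exact absurd he (stable_ne_super hx hylt)
    · push_neg at hylt; omega

lemma rank_super {B x : ℕ} (hx : x + 1 < 2 ^ B) : rank B (superStr B x) = 2 * x + 1 := by
  have hmem : 2 * x + 1 ∈ {n | (∃ y, n = 2 * y ∧ superStr B x = stableStr B y) ∨
      (∃ y, n = 2 * y + 1 ∧ superStr B x = superStr B y)} := Or.inr ⟨x, rfl, rfl⟩
  apply le_antisymm (Nat.sInf_le hmem)
  have hne : {n | (∃ y, n = 2 * y ∧ superStr B x = stableStr B y) ∨
      (∃ y, n = 2 * y + 1 ∧ superStr B x = superStr B y)}.Nonempty := ⟨_, hmem⟩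
  have hsm := Nat.sInf_mem hne
  rcases hsm with ⟨y, hy, he⟩ | ⟨y, hy, he⟩
  · rw [hy]
    by_cases hylt : y < 2 ^ B
    · exact absurd he.symm (stable_ne_super hylt hx)
    · push_neg at hylt; omega
  · rw [hy]
    by_cases hylt : y + 1 < 2 ^ B
    · rw [super_inj hx hylt he]
    · push_neg at hylt; omega

lemma maxset_eq {B : ℕ} (g h : Fin B → KBit) (A Bi : Set ℕ)
    (hA : ∀ a ∈ A, a < 2 ^ B) (hB : ∀ b ∈ Bi, b < 2 ^ B)
    (hg : res g = rg B '' A) (hh : res h = rg B '' Bi)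
    (hmax : ∀ a ∈ A, ∀ b ∈ Bi, max a b ∈ Bi)
    (a0 : ℕ) (ha0 : a0 ∈ A) (ha0le : ∀ b ∈ Bi, a0 ≤ b) :
    {z | ∃ g' ∈ res g, ∃ h' ∈ res h, z = maxrg B g' h'} = res h := by
  ext z
  simp only [Set.mem_setOf_eq, hg, hh, Set.mem_image]
  constructor
  · rintro ⟨g', ⟨a, ha, rfl⟩, h', ⟨b, hb, rfl⟩, rfl⟩
    exact ⟨max a b, hmax a ha b hb, (maxrg_rg (hA a ha) (hB b hb)).symm⟩
  · rintro ⟨b, hb, rfl⟩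
    refine ⟨rg B a0, ⟨a0, ha0, rfl⟩, rg B b, ⟨b, hb, rfl⟩, ?_⟩
    rw [maxrg_rg (hA a0 ha0) (hB b hb), Nat.max_eq_right (ha0le b hb)]

lemma minset_eq {B : ℕ} (g h : Fin B → KBit) (A Bi : Set ℕ)
    (hA : ∀ a ∈ A, a < 2 ^ B) (hB : ∀ b ∈ Bi, b < 2 ^ B)
    (hg : res g = rg B '' A) (hh : res h = rg B '' Bi)
    (hmin : ∀ a ∈ A, ∀ b ∈ Bi, min a b ∈ A)
    (b0 : ℕ) (hb0 : b0 ∈ Bi) (hb0le : ∀ a ∈ A, a ≤ b0) :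
    {z | ∃ g' ∈ res g, ∃ h' ∈ res h, z = minrg B g' h'} = res g := by
  ext z
  simp only [Set.mem_setOf_eq, hg, hh, Set.mem_image]
  constructor
  · rintro ⟨g', ⟨a, ha, rfl⟩, h', ⟨b, hb, rfl⟩, rfl⟩
    exact ⟨min a b, hmin a ha b hb, (minrg_rg (hA a ha) (hB b hb)).symm⟩
  · rintro ⟨a, ha, rfl⟩
    refine ⟨rg B a, ⟨a, ha, rfl⟩, rg B b0, ⟨b0, hb0, rfl⟩, ?_⟩
    rw [minrg_rg (hA a ha) (hB b0 hb0), Nat.min_eq_left (hb0le a ha)]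

lemma supStr_res_stable (B x : ℕ) : supStr (res (stableStr B x)) = stableStr B x := by
  rw [res_stable, supStr_singleton]; rfl

lemma supStr_res_super (B x : ℕ) (hx : x + 1 < 2 ^ B) :
    supStr (res (superStr B x)) = superStr B x := by
  rw [res_super hx, supStr_pair_super]

lemma res_stable_img (B x : ℕ) : res (stableStr B x) = rg B '' {x} := by
  rw [res_stable, Set.image_singleton]

lemma res_super_img {B x : ℕ} (hx : x + 1 < 2 ^ B) :
    res (superStr B x) = rg B '' {x, x+1} := by
  rw [res_super hx, Set.image_pair]

lemma valid_res {B : ℕ} {g : Fin B → KBit} (hg : g ∈ Valid B) :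
    ∀ g' ∈ res g, ∃ a, a < 2 ^ B ∧ g' = rg B a := by
  rcases hg with ⟨x, hx, rfl⟩ | ⟨x, hx, rfl⟩
  · intro g' hg'
    rw [res_stable] at hg'
    exact ⟨x, hx, hg'⟩
  · intro g' hg'
    rw [res_super hx] at hg'
    rcases hg' with hg' | hg'
    · exact ⟨x, by omega, hg'⟩
    · exact ⟨x+1, hx, hg'⟩

lemma maxrgM_comm {B : ℕ} {g h : Fin B → KBit} (hg : g ∈ Valid B) (hh : h ∈ Valid B) :
    maxrgM B g h = maxrgM B h g := by
  have hset : {z | ∃ g' ∈ res g, ∃ h' ∈ res h, z = maxrg B g' h'}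
      = {z | ∃ g' ∈ res h, ∃ h' ∈ res g, z = maxrg B g' h'} := by
    ext z
    simp only [Set.mem_setOf_eq]
    constructor
    · rintro ⟨g', hg', h', hh', rfl⟩
      refine ⟨h', hh', g', hg', ?_⟩
      obtain ⟨a, ha, rfl⟩ := valid_res hg g' hg'
      obtain ⟨b, hb, rfl⟩ := valid_res hh h' hh'
      rw [maxrg_rg ha hb, maxrg_rg hb ha, Nat.max_comm]
    · rintro ⟨h', hh', g', hg', rfl⟩
      refine ⟨g', hg', h', hh', ?_⟩
      obtain ⟨a, ha, rfl⟩ := valid_res hg g' hg'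
      obtain ⟨b, hb, rfl⟩ := valid_res hh h' hh'
      rw [maxrg_rg ha hb, maxrg_rg hb ha, Nat.max_comm]
  rw [maxrgM, maxrgM, hset]

lemma minrgM_comm {B : ℕ} {g h : Fin B → KBit} (hg : g ∈ Valid B) (hh : h ∈ Valid B) :
    minrgM B g h = minrgM B h g := by
  have hset : {z | ∃ g' ∈ res g, ∃ h' ∈ res h, z = minrg B g' h'}
      = {z | ∃ g' ∈ res h, ∃ h' ∈ res g, z = minrg B g' h'} := by
    ext z
    simp only [Set.mem_setOf_eq]
    constructor
    · rintro ⟨g', hg', h', hh', rfl⟩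
      refine ⟨h', hh', g', hg', ?_⟩
      obtain ⟨a, ha, rfl⟩ := valid_res hg g' hg'
      obtain ⟨b, hb, rfl⟩ := valid_res hh h' hh'
      rw [minrg_rg ha hb, minrg_rg hb ha, Nat.min_comm]
    · rintro ⟨h', hh', g', hg', rfl⟩
      refine ⟨g', hg', h', hh', ?_⟩
      obtain ⟨a, ha, rfl⟩ := valid_res hg g' hg'
      obtain ⟨b, hb, rfl⟩ := valid_res hh h' hh'
      rw [minrg_rg ha hb, minrg_rg hb ha, Nat.min_comm]
  rw [minrgM, minrgM, hset]

lemma supStr_res_valid {B : ℕ} {g : Fin B → KBit} (hg : g ∈ Valid B) :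
    supStr (res g) = g := by
  rcases hg with ⟨x, _, rfl⟩ | ⟨x, hx, rfl⟩
  · exact supStr_res_stable B x
  · exact supStr_res_super B x hx

lemma twosort_forward {B : ℕ} (g h : Fin B → KBit)
    (hg : g ∈ Valid B) (hh : h ∈ Valid B) (hle : preceq B g h) :
    maxrgM B g h = h ∧ minrgM B g h = g := by
  have memset : ∀ (c : ℕ) (S : Set ℕ), c ∈ S → c ∈ S := fun _ _ hc => hc
  rcases hg with ⟨x, hx, rfl⟩ | ⟨x, hx, rfl⟩ <;>
    rcases hh with ⟨y, hy, rfl⟩ | ⟨y, hy, rfl⟩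
  · -- stable / stable
    rw [preceq, rank_stable hx, rank_stable hy] at hle
    have hxy : x ≤ y := by omega
    constructor
    · rw [maxrgM, maxset_eq _ _ {x} {y}
        (by simpa using hx) (by simpa using hy)
        (res_stable_img B x) (res_stable_img B y)
        (by intro a ha b hb; simp at ha hb ⊢; omega)
        x rfl (by intro b hb; simp at hb; omega)]
      exact supStr_res_valid (Or.inl ⟨y, hy, rfl⟩)
    · rw [minrgM, minset_eq _ _ {x} {y}
        (by simpa using hx) (by simpa using hy)
        (res_stable_img B x) (res_stable_img B y)
        (by intro a ha b hb; simp at ha hb ⊢; omega)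
        y rfl (by intro a ha; simp at ha; omega)]
      exact supStr_res_valid (Or.inl ⟨x, hx, rfl⟩)
  · -- stable / super
    rw [preceq, rank_stable hx, rank_super hy] at hle
    have hxy : x ≤ y := by omega
    constructor
    · rw [maxrgM, maxset_eq _ _ {x} {y, y+1}
        (by simpa using hx) (by intro b hb; simp at hb; omega)
        (res_stable_img B x) (res_super_img hy)
        (by intro a ha b hb; simp at ha hb ⊢; omega)
        x rfl (by intro b hb; simp at hb; omega)]
      exact supStr_res_valid (Or.inr ⟨y, hy, rfl⟩)
    · rw [minrgM, minset_eq _ _ {x} {y, y+1}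
        (by simpa using hx) (by intro b hb; simp at hb; omega)
        (res_stable_img B x) (res_super_img hy)
        (by intro a ha b hb; simp at ha hb ⊢; omega)
        (y+1) (by simp) (by intro a ha; simp at ha; omega)]
      exact supStr_res_valid (Or.inl ⟨x, hx, rfl⟩)
  · -- super / stable
    rw [preceq, rank_super hx, rank_stable hy] at hle
    have hxy : x + 1 ≤ y := by omega
    constructor
    · rw [maxrgM, maxset_eq _ _ {x, x+1} {y}
        (by intro a ha; simp at ha; omega) (by simpa using hy)
        (res_super_img hx) (res_stable_img B y)
        (by intro a ha b hb; simp at ha hb ⊢; omega)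
        x (by simp) (by intro b hb; simp at hb; omega)]
      exact supStr_res_valid (Or.inl ⟨y, hy, rfl⟩)
    · rw [minrgM, minset_eq _ _ {x, x+1} {y}
        (by intro a ha; simp at ha; omega) (by simpa using hy)
        (res_super_img hx) (res_stable_img B y)
        (by intro a ha b hb; simp at ha hb ⊢; omega)
        y rfl (by intro a ha; simp at ha; omega)]
      exact supStr_res_valid (Or.inr ⟨x, hx, rfl⟩)
  · -- super / super
    rw [preceq, rank_super hx, rank_super hy] at hle
    have hxy : x ≤ y := by omega
    constructor
    · rw [maxrgM, maxset_eq _ _ {x, x+1} {y, y+1}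
        (by intro a ha; simp at ha; omega) (by intro b hb; simp at hb; omega)
        (res_super_img hx) (res_super_img hy)
        (by intro a ha b hb; simp at ha hb ⊢; omega)
        x (by simp) (by intro b hb; simp at hb; omega)]
      exact supStr_res_valid (Or.inr ⟨y, hy, rfl⟩)
    · rw [minrgM, minset_eq _ _ {x, x+1} {y, y+1}
        (by intro a ha; simp at ha; omega) (by intro b hb; simp at hb; omega)
        (res_super_img hx) (res_super_img hy)
        (by intro a ha b hb; simp at ha hb ⊢; omega)
        (y+1) (by simp) (by intro a ha; simp at ha; omega)]
      exact supStr_res_valid (Or.inr ⟨x, hx, rfl⟩)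

theorem twosort_closure (B : ℕ) (g h : Fin B → KBit)
    (hg : g ∈ Valid B) (hh : h ∈ Valid B) :
    preceq B g h ↔ (maxrgM B g h = h ∧ minrgM B g h = g) := by
  constructor
  · exact twosort_forward g h hg hh
  · rintro ⟨h1, h2⟩
    by_contra hc
    have hle : preceq B h g := le_of_not_ge hc
    obtain ⟨h1', _⟩ := twosort_forward h g hh hg hle
    rw [← maxrgM_comm hg hh] at h1'
    rw [h1'] at h1
    subst h1
    exact hc le_rfl
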